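/- For m ≥ 4, the gcd of the interior binomial coefficients gcd{ C(m+1, i) : 2 ≤ i ≤ m-1 } equals d(m)·d(m-1), where d(k) = gcd{ C(k+1, i) : 1 ≤ i ≤ k-1 } (equivalently, d(k) = p if k+1 is a power of the prime p and d(k) = 1 otherwise). -/

import Mathlib

/-- `d k` is the gcd of the binomial coefficients `C(k+1,1), ..., C(k+1,k-1)`. -/
def dGcd (k : ℕ) : ℕ := (Finset.Icc 1 (k - 1)).gcd fun i => (k + 1).choose i

open Nat Finset

/-- If `k ≤ r^s` has `r`-adic valuation `s-1`, then `C(r^s, k)` is not divisible by `r^2`. -/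
lemma aux_not_sq_dvd {r s k : ℕ} (hr : r.Prime) (hs : 1 ≤ s) (hk0 : k ≠ 0)
    (hks : k ≤ r ^ s) (hv : emultiplicity r k = ((s - 1 : ℕ) : ℕ∞)) :
    ¬ r ^ 2 ∣ (r ^ s).choose k := by
  intro h
  have hsum := hr.emultiplicity_choose_prime_pow_add_emultiplicity hks hk0
  rw [hv] at hsum
  have h2 : (2 : ℕ∞) ≤ emultiplicity r ((r ^ s).choose k) := le_emultiplicity_of_pow_dvd h
  have h3 : (2 : ℕ∞) + ((s - 1 : ℕ) : ℕ∞) ≤ (s : ℕ∞) := hsum ▸ add_le_add h2 le_rfl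
  have h4 : 2 + (s - 1) ≤ s := by exact_mod_cast h3
  omega

lemma not_sq_dvd_pow_choose {r s : ℕ} (hr : r.Prime) (hs : 1 ≤ s) :
    ¬ r ^ 2 ∣ (r ^ s).choose (r ^ (s - 1)) :=
  aux_not_sq_dvd hr hs (pow_ne_zero _ hr.pos.ne') (Nat.pow_le_pow_right hr.pos (by omega))
    (emultiplicity_pow_self_of_prime hr.prime _)

lemma not_sq_dvd_choose_two {r : ℕ} (hr : r.Prime) (h5 : 5 ≤ r) :
    ¬ r ^ 2 ∣ r.choose 2 := by
  have hv : emultiplicity r 2 = ((0 : ℕ) : ℕ∞) := by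
    rw [Nat.cast_zero, emultiplicity_eq_zero]
    intro hdvd
    have := Nat.le_of_dvd two_pos hdvd
    omega
  have := aux_not_sq_dvd (s := 1) hr le_rfl two_ne_zero (by simpa using hr.two_le) hv
  simpa using this

lemma not_sq_dvd_succ_choose {r s : ℕ} (hr : r.Prime) (hs : 1 ≤ s) :
    ¬ r ^ 2 ∣ (r ^ s + 1).choose (r ^ (s - 1) + 1) := by
  intro h
  have key : (r ^ s + 1) * (r ^ s).choose (r ^ (s - 1)) =
      (r ^ s + 1).choose (r ^ (s - 1) + 1) * (r ^ (s - 1) + 1) :=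
    Nat.add_one_mul_choose_eq _ _
  have h2 : r ^ 2 ∣ (r ^ s + 1) * (r ^ s).choose (r ^ (s - 1)) := by
    rw [key]; exact h.mul_right _
  have hco : Nat.Coprime (r ^ 2) (r ^ s + 1) := by
    apply Nat.Coprime.pow_left
    rw [hr.coprime_iff_not_dvd]
    intro hdvd
    have h1 : r ∣ 1 := (Nat.dvd_add_right (dvd_pow_self r (by omega))).mp hdvd
    exact hr.one_lt.ne' (Nat.dvd_one.mp h1)
  exact not_sq_dvd_pow_choose hr hs (hco.dvd_of_dvd_mul_left h2)

/-- If the base-`r` digit of `n` at the top position `t` is nonzero, `r ∤ C(n, r^t)`. -/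
lemma not_dvd_choose_pow_log {r n t : ℕ} (hr : r.Prime) (h1 : r ^ t ≤ n)
    (h2 : n < r ^ (t + 1)) : ¬ r ∣ n.choose (r ^ t) := by
  haveI := Fact.mk hr
  have hmod := Choose.choose_modEq_prod_range_choose_nat (p := r) (n := n) (k := r ^ t)
    (a := t + 1) h2 (lt_of_le_of_lt h1 h2)
  have hpt : 0 < r ^ t := pow_pos hr.pos t
  have hd1 : 1 ≤ n / r ^ t := (Nat.one_le_div_iff hpt).2 h1
  have hd2 : n / r ^ t < r := by
    rw [Nat.div_lt_iff_lt_mul hpt]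
    calc n < r ^ (t + 1) := h2
    _ = r * r ^ t := by ring
  have hprod : (∏ i ∈ Finset.range (t + 1),
      (n / r ^ i % r).choose (r ^ t / r ^ i % r)) = n / r ^ t % r := by
    rw [Finset.prod_eq_single_of_mem t (Finset.self_mem_range_succ t)]
    · rw [Nat.div_self hpt, Nat.one_mod_eq_one.2 hr.one_lt.ne', Nat.choose_one_right]
    · intro i hi hne
      have hit : i < t := by
        have := Finset.mem_range.1 hi; omega
      have hz : r ^ t / r ^ i % r = 0 := by
        rw [Nat.pow_div hit.le hr.pos]
        exact Nat.dvd_iff_mod_eq_zero.mp (dvd_pow_self r (by omega))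
      rw [hz, Nat.choose_zero_right]
  rw [hprod] at hmod
  intro hdvd
  have hC0 : n.choose (r ^ t) ≡ 0 [MOD r] := (Nat.modEq_zero_iff_dvd).2 hdvd
  have hdd : r ∣ n / r ^ t % r := (Nat.modEq_zero_iff_dvd).1 (hC0.symm.trans hmod).symm
  rw [Nat.mod_eq_of_lt hd2] at hdd
  have := Nat.le_of_dvd (by omega) hdd
  omega

theorem interior_gcd_eq (m : ℕ) (hm : 4 ≤ m) :
    ((Finset.Icc 2 (m - 1)).gcd fun i => (m + 1).choose i) = dGcd m * dGcd (m - 1) := by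
  have hm1 : m - 1 + 1 = m := by omega
  set D2 := (Finset.Icc 2 (m - 1)).gcd fun i => (m + 1).choose i with hD2
  have hD2dvd : ∀ i, 2 ≤ i → i ≤ m - 1 → D2 ∣ (m + 1).choose i := fun i h2 h3 =>
    Finset.gcd_dvd (Finset.mem_Icc.2 ⟨h2, h3⟩)
  have hdm : ∀ i, 1 ≤ i → i ≤ m - 1 → dGcd m ∣ (m + 1).choose i := fun i h1 h2 =>
    Finset.gcd_dvd (Finset.mem_Icc.2 ⟨h1, h2⟩)
  have hdGm1 : dGcd (m - 1) = (Finset.Icc 1 (m - 2)).gcd fun i => m.choose i := by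
    unfold dGcd
    rw [hm1, show m - 1 - 1 = m - 2 from by omega]
  have hdm' : ∀ i, 1 ≤ i → i ≤ m - 1 → dGcd (m - 1) ∣ m.choose i := by
    intro i h1 h2
    have hch1 : dGcd (m - 1) ∣ m.choose 1 :=
      hdGm1 ▸ Finset.gcd_dvd (Finset.mem_Icc.2 ⟨le_rfl, by omega⟩)
    rcases eq_or_lt_of_le h2 with rfl | hlt
    · have hms : m.choose (m - 1) = m := by
        rw [Nat.choose_symm (show 1 ≤ m by omega), Nat.choose_one_right]
      rw [hms]
      simpa using hch1
    · exact hdGm1 ▸ Finset.gcd_dvd (Finset.mem_Icc.2 ⟨h1, by omega⟩)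
  have ham : dGcd m ∣ m + 1 := by simpa using hdm 1 le_rfl (by omega)
  have hbm : dGcd (m - 1) ∣ m := by simpa using hdm' 1 le_rfl (by omega)
  have hPm : dGcd m ≠ 0 := fun h => by
    rw [h] at ham
    exact absurd (Nat.eq_zero_of_zero_dvd ham) (by omega)
  have hPm' : dGcd (m - 1) ≠ 0 := fun h => by
    rw [h] at hbm
    exact absurd (Nat.eq_zero_of_zero_dvd hbm) (by omega)
  have hD2ne : D2 ≠ 0 := by
    intro h
    have h2 := hD2dvd 2 le_rfl (by omega)
    rw [h] at h2
    have h3 := Nat.eq_zero_of_zero_dvd h2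
    have h4 := Nat.choose_pos (show 2 ≤ m + 1 by omega)
    omega
  apply Nat.dvd_antisymm
  · -- hard direction
    rw [← Nat.factorization_le_iff_dvd hD2ne (mul_ne_zero hPm hPm'), Finsupp.le_def]
    intro r
    by_cases hr : r.Prime
    swap
    · simp [Nat.factorization_eq_zero_of_not_prime _ hr]
    have hmulfact : (dGcd m * dGcd (m - 1)).factorization r
        = (dGcd m).factorization r + (dGcd (m - 1)).factorization r := by
      rw [Nat.factorization_mul hPm hPm', Finsupp.add_apply]
    rw [hmulfact]
    have hfD2_le : ∀ i, 2 ≤ i → i ≤ m - 1 →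
        D2.factorization r ≤ ((m + 1).choose i).factorization r := by
      intro i h2 h3
      have hne : (m + 1).choose i ≠ 0 := (Nat.choose_pos (by omega)).ne'
      exact (Nat.factorization_le_iff_dvd hD2ne hne).2 (hD2dvd i h2 h3) r
    by_cases hc1 : ∃ s, 1 ≤ s ∧ m + 1 = r ^ s
    · obtain ⟨s, hs1, hns⟩ := hc1
      have hrd : r ∣ dGcd m := by
        apply Finset.dvd_gcd
        intro i hi
        obtain ⟨h1i, h2i⟩ := Finset.mem_Icc.1 hi
        rw [hns]
        exact Nat.Prime.dvd_choose_pow hr (by omega) (by omega)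
      have h1le : 1 ≤ (dGcd m).factorization r := hr.factorization_pos_of_dvd hPm hrd
      have hkey : ∃ i, 2 ≤ i ∧ i ≤ m - 1 ∧ ¬ r ^ 2 ∣ (m + 1).choose i := by
        rcases eq_or_lt_of_le hs1 with rfl | hs2
        · refine ⟨2, le_rfl, by omega, ?_⟩
          have hrm : r = m + 1 := by rw [hns, pow_one]
          rw [hns, pow_one]
          exact not_sq_dvd_choose_two hr (by omega)
        · have h2r : 2 ≤ r ^ (s - 1) := le_trans hr.two_le (Nat.le_self_pow (by omega) r)
          have hmul : 2 * r ^ (s - 1) ≤ m + 1 := by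
            rw [hns]
            calc 2 * r ^ (s - 1) ≤ r * r ^ (s - 1) := by
                  exact Nat.mul_le_mul_right _ hr.two_le
            _ = r ^ s := by rw [← _root_.pow_succ']; congr 1; omega
          refine ⟨r ^ (s - 1), h2r, by omega, ?_⟩
          rw [hns]
          exact not_sq_dvd_pow_choose hr hs1
      obtain ⟨i, h2i, him, hnd⟩ := hkey
      have hle1 : D2.factorization r ≤ 1 := by
        refine le_trans (hfD2_le i h2i him) ?_
        by_contra hcon
        push_neg at hcon
        exact hnd ((hr.pow_dvd_iff_le_factorization (Nat.choose_pos (by omega)).ne').2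
          (by omega))
      omega
    by_cases hc2 : ∃ s, 1 ≤ s ∧ m = r ^ s
    · obtain ⟨s, hs1, hns⟩ := hc2
      have hrd : r ∣ dGcd (m - 1) := by
        rw [hdGm1]
        apply Finset.dvd_gcd
        intro i hi
        obtain ⟨h1i, h2i⟩ := Finset.mem_Icc.1 hi
        rw [hns]
        exact Nat.Prime.dvd_choose_pow hr (by omega) (by omega)
      have h1le : 1 ≤ (dGcd (m - 1)).factorization r := hr.factorization_pos_of_dvd hPm' hrd
      have hbound : r ^ (s - 1) + 2 ≤ r ^ s := by
        rcases eq_or_lt_of_le hs1 with rfl | hs2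
        · have hrm : r = m := by rw [hns, pow_one]
          simp only [Nat.sub_self, pow_zero, pow_one]
          omega
        · have h2r : 2 ≤ r ^ (s - 1) := le_trans hr.two_le (Nat.le_self_pow (by omega) r)
          have hmul : 2 * r ^ (s - 1) ≤ r ^ s := by
            calc 2 * r ^ (s - 1) ≤ r * r ^ (s - 1) := Nat.mul_le_mul_right _ hr.two_le
            _ = r ^ s := by rw [← _root_.pow_succ']; congr 1; omega
          omega
      have hp1 : 1 ≤ r ^ (s - 1) := Nat.one_le_pow _ _ hr.pos
      have hnd : ¬ r ^ 2 ∣ (m + 1).choose (r ^ (s - 1) + 1) := by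
        rw [hns]
        exact not_sq_dvd_succ_choose hr hs1
      have hle1 : D2.factorization r ≤ 1 := by
        refine le_trans (hfD2_le (r ^ (s - 1) + 1) (by omega) (by omega)) ?_
        by_contra hcon
        push_neg at hcon
        exact hnd ((hr.pow_dvd_iff_le_factorization (Nat.choose_pos (by omega)).ne').2
          (by omega))
      omega
    · -- neither a power of r: valuation of D2 is 0
      have hkey : ∃ i, 2 ≤ i ∧ i ≤ m - 1 ∧ ((m + 1).choose i).factorization r = 0 := by
        by_cases hlt : m + 1 < r
        · exact ⟨2, le_rfl, by omega, Nat.factorization_choose_eq_zero_of_lt hlt⟩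
        · push_neg at hlt
          set t := Nat.log r (m + 1) with ht
          have ht1 : 1 ≤ t := Nat.log_pos hr.one_lt hlt
          have hle : r ^ t ≤ m + 1 := Nat.pow_log_le_self r (by omega)
          have hlt2 : m + 1 < r ^ (t + 1) := Nat.lt_pow_succ_log_self hr.one_lt _
          have hne1 : r ^ t ≠ m + 1 := fun h => hc1 ⟨t, ht1, h.symm⟩
          have hne2 : r ^ t ≠ m := fun h => hc2 ⟨t, ht1, h.symm⟩
          have h2r : 2 ≤ r ^ t := le_trans hr.two_le (Nat.le_self_pow (by omega) r)
          exact ⟨r ^ t, h2r, by omega,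
            Nat.factorization_eq_zero_of_not_dvd (not_dvd_choose_pow_log hr hle hlt2)⟩
      obtain ⟨i, h2i, him, hf0⟩ := hkey
      have := le_trans (hfD2_le i h2i him) (le_of_eq hf0)
      omega
  · -- easy direction
    have h1 : dGcd m ∣ D2 := Finset.dvd_gcd fun i hi => by
      obtain ⟨h2i, him⟩ := Finset.mem_Icc.1 hi
      exact hdm i (by omega) him
    have h2 : dGcd (m - 1) ∣ D2 := Finset.dvd_gcd fun i hi => by
      obtain ⟨h2i, him⟩ := Finset.mem_Icc.1 hi
      obtain ⟨j, rfl⟩ : ∃ j, i = j + 1 := ⟨i - 1, by omega⟩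
      rw [Nat.choose_succ_succ]
      exact dvd_add (hdm' j (by omega) (by omega)) (hdm' (j + 1) (by omega) (by omega))
    have hco : Nat.Coprime (dGcd m) (dGcd (m - 1)) :=
      Nat.Coprime.coprime_dvd_left ham
        (Nat.Coprime.coprime_dvd_right hbm (Nat.coprime_self_add_left.mpr (by simp [Nat.Coprime])))
    exact hco.mul_dvd_of_dvd_of_dvd h1 h2
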